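/- For every real β > 2, the function t ↦ (∑_{m=1}^∞ m^{1−β} t^{α(m)}) / (∑_{m=1}^∞ m^{−β} t^{α(m)}) belongs to L¹(𝕋^ω, dt). -/

import Mathlib

open MeasureTheory Filter Finset

noncomputable section

instance : MeasurableSpace Circle := borel Circle
instance : BorelSpace Circle := ⟨rfl⟩

/-- The infinite-dimensional torus `𝕋^ω`, a countable product of unit circles. -/
abbrev Torus : Type := ℕ → Circle

/-- `pprime j` is the `j`-th prime (`0`-indexed, so `pprime 0 = 2`). -/
def pprime (j : ℕ) : ℕ := Nat.nth Nat.Prime j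

/-- `expOf n j` is `α_j(n)`, the exponent of the `j`-th prime in the factorization of `n`. -/
def expOf (n j : ℕ) : ℕ := n.factorization (pprime j)

/-- `tpow t n = t^{α(n)} = ∏_j t_j^{α_j(n)}`, a finite product. -/
def tpow (t : Torus) (n : ℕ) : ℂ := ∏ᶠ j, ((t j : ℂ) ^ expOf n j)

lemma tpow_eq_prod (t : Torus) (n : ℕ) :
    tpow t n = ∏ j ∈ Finset.range (n + 1), ((t j : ℂ) ^ expOf n j) := by
  apply finprod_eq_prod_of_mulSupport_subset
  intro j hj
  simp only [Function.mem_mulSupport] at hj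
  have he : expOf n j ≠ 0 := by
    intro h; rw [h] at hj; simp at hj
  have hn : n ≠ 0 := by
    rintro rfl; exact he (by simp [expOf])
  have hdvd : pprime j ∣ n := Nat.dvd_of_factorization_pos he
  have hle : pprime j ≤ n := Nat.le_of_dvd (Nat.pos_of_ne_zero hn) hdvd
  have hj' : j ≤ pprime j :=
    (Nat.nth_strictMono Nat.infinite_setOf_prime).le_apply
  simp only [Finset.coe_range, Set.mem_Iio]
  omega

lemma abs_tpow (t : Torus) (n : ℕ) : ‖tpow t n‖ = 1 := by
  rw [tpow_eq_prod, norm_prod]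
  apply Finset.prod_eq_one
  intro j _
  rw [norm_pow, Circle.norm_coe, one_pow]

lemma tpow_one (t : Torus) : tpow t 1 = 1 := by
  rw [tpow_eq_prod]
  apply Finset.prod_eq_one
  intro j _
  simp [expOf]

lemma continuous_tpow (n : ℕ) : Continuous (fun t : Torus => tpow t n) := by
  simp only [funext fun t => tpow_eq_prod t n]
  apply continuous_finset_prod
  intro j _
  exact (continuous_subtype_val.comp (continuous_apply j)).pow _

/-- For every real `β > 2`, the function
`t ↦ (∑_{m=1}^∞ m^{1-β} t^{α(m)}) / (∑_{m=1}^∞ m^{-β} t^{α(m)})` belongs to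
`L¹(𝕋^ω, dt)`, where `dt` is the normalized Haar measure on `𝕋^ω`. -/
theorem totient_transform_integrable (β : ℝ) (hβ : 2 < β)
    (ν : Measure Torus) [ν.IsHaarMeasure] [IsProbabilityMeasure ν] :
    Integrable (fun t : Torus =>
      (∑' m : ℕ, Complex.ofReal (((m : ℝ) + 1) ^ (1 - β)) * tpow t (m + 1)) /
        (∑' m : ℕ, Complex.ofReal (((m : ℝ) + 1) ^ (-β)) * tpow t (m + 1))) ν := by
  have hβ1 : (1 : ℝ) - β < -1 := by linarith
  have hβ2 : -β < -1 := by linarith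
  -- summability of coefficient series
  have hS1 : Summable (fun m : ℕ => ((m : ℝ) + 1) ^ (1 - β)) := by
    have h := Real.summable_nat_rpow.mpr hβ1
    have h2 := (summable_nat_add_iff 1).mpr h
    refine h2.congr fun m => ?_
    push_cast
    ring_nf
  have hS2 : Summable (fun m : ℕ => ((m : ℝ) + 1) ^ (-β)) := by
    have h := Real.summable_nat_rpow.mpr hβ2
    have h2 := (summable_nat_add_iff 1).mpr h
    refine h2.congr fun m => ?_
    push_cast
    ring_nf
  -- norms of terms
  have hnorm1 : ∀ (t : Torus) (m : ℕ),
      ‖Complex.ofReal (((m : ℝ) + 1) ^ (1 - β)) * tpow t (m + 1)‖ = ((m : ℝ) + 1) ^ (1 - β) := by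
    intro t m
    rw [norm_mul, abs_tpow, mul_one,
      Complex.norm_real, Real.norm_eq_abs, abs_of_nonneg (Real.rpow_nonneg (by positivity) _)]
  have hnorm2 : ∀ (t : Torus) (m : ℕ),
      ‖Complex.ofReal (((m : ℝ) + 1) ^ (-β)) * tpow t (m + 1)‖ = ((m : ℝ) + 1) ^ (-β) := by
    intro t m
    rw [norm_mul, abs_tpow, mul_one,
      Complex.norm_real, Real.norm_eq_abs, abs_of_nonneg (Real.rpow_nonneg (by positivity) _)]
  -- summability of the series themselves
  have hsum1 : ∀ t : Torus,
      Summable (fun m : ℕ => Complex.ofReal (((m : ℝ) + 1) ^ (1 - β)) * tpow t (m + 1)) := by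
    intro t
    apply Summable.of_norm
    exact hS1.congr fun m => (hnorm1 t m).symm
  have hsum2 : ∀ t : Torus,
      Summable (fun m : ℕ => Complex.ofReal (((m : ℝ) + 1) ^ (-β)) * tpow t (m + 1)) := by
    intro t
    apply Summable.of_norm
    exact hS2.congr fun m => (hnorm2 t m).symm
  set N : Torus → ℂ :=
    fun t => ∑' m : ℕ, Complex.ofReal (((m : ℝ) + 1) ^ (1 - β)) * tpow t (m + 1) with hN_def
  set D : Torus → ℂ :=
    fun t => ∑' m : ℕ, Complex.ofReal (((m : ℝ) + 1) ^ (-β)) * tpow t (m + 1) with hD_def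
  -- continuity
  have hNcont : Continuous N := by
    apply continuous_tsum (u := fun m : ℕ => ((m : ℝ) + 1) ^ (1 - β))
    · exact fun m => continuous_const.mul (continuous_tpow (m + 1))
    · exact hS1
    · exact fun m t => le_of_eq (hnorm1 t m)
  have hDcont : Continuous D := by
    apply continuous_tsum (u := fun m : ℕ => ((m : ℝ) + 1) ^ (-β))
    · exact fun m => continuous_const.mul (continuous_tpow (m + 1))
    · exact hS2
    · exact fun m t => le_of_eq (hnorm2 t m)
  -- numerator bound
  set C : ℝ := ∑' m : ℕ, ((m : ℝ) + 1) ^ (1 - β) with hC_def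
  have hNle : ∀ t, ‖N t‖ ≤ C := by
    intro t
    refine (norm_tsum_le_tsum_norm ?_).trans_eq ?_
    · exact hS1.congr fun m => (hnorm1 t m).symm
    · exact tsum_congr fun m => hnorm1 t m
  -- tail bound for denominator
  set R : ℝ := ∑' m : ℕ, ((m : ℝ) + 2) ^ (-β) with hR_def
  have hSg : Summable (fun m : ℕ => ((m : ℝ) + 2) ^ (-β)) := by
    have h := Real.summable_nat_rpow.mpr hβ2
    have h2 := (summable_nat_add_iff 2).mpr h
    refine h2.congr fun m => ?_
    push_cast
    ring_nf
  have hRlt : R < 1 := by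
    have hcmp : ∀ m : ℕ, ((m : ℝ) + 2) ^ (-β) ≤ 1 / ((m : ℝ) + 2) ^ 2 := by
      intro m
      have h1 : ((m : ℝ) + 2) ^ (-β) ≤ ((m : ℝ) + 2) ^ (-2 : ℝ) :=
        Real.rpow_le_rpow_of_exponent_le (by linarith [Nat.cast_nonneg (α := ℝ) m]) (by linarith)
      have h2 : ((m : ℝ) + 2) ^ (-2 : ℝ) = 1 / ((m : ℝ) + 2) ^ 2 := by
        rw [show (-2 : ℝ) = -(2 : ℕ) by norm_num, Real.rpow_neg (by positivity),
          Real.rpow_natCast, one_div]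
      rw [h2] at h1
      exact h1
    have hbasel := hasSum_zeta_two
    have htail : HasSum (fun n : ℕ => (1 : ℝ) / ((n : ℝ) + 2) ^ 2) (Real.pi ^ 2 / 6 - 1) := by
      have h2 : HasSum (fun n : ℕ => (1 : ℝ) / (n : ℝ) ^ 2)
          ((Real.pi ^ 2 / 6 - 1) + ∑ i ∈ range 2, (1 : ℝ) / (i : ℝ) ^ 2) := by
        convert hbasel using 1
        simp [Finset.sum_range_succ]
      have h3 := (hasSum_nat_add_iff (f := fun n : ℕ => (1 : ℝ) / (n : ℝ) ^ 2) 2).mpr h2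
      convert h3 using 2 with n
      · rfl
      push_cast
      ring_nf
    have hsq : Summable (fun n : ℕ => (1 : ℝ) / ((n : ℝ) + 2) ^ 2) := htail.summable
    have hle : R ≤ Real.pi ^ 2 / 6 - 1 := by
      rw [hR_def, ← htail.tsum_eq]
      exact Summable.tsum_le_tsum hcmp hSg hsq
    have hReal.pi : Real.pi < 3.15 := Real.pi_lt_d2
    nlinarith [Real.pi_pos]
  have hRnn : 0 ≤ R :=
    tsum_nonneg fun m => Real.rpow_nonneg (by positivity) _
  -- denominator lower bound
  have hDge : ∀ t, 1 - R ≤ ‖D t‖ := by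
    intro t
    have hsplit : D t = 1 + ∑' m : ℕ,
        Complex.ofReal ((((m + 1 : ℕ) : ℝ) + 1) ^ (-β)) * tpow t ((m + 1) + 1) := by
      simp only [hD_def]
      rw [Summable.tsum_eq_zero_add (hsum2 t)]
      congr 1
      · norm_num [tpow_one, Real.one_rpow]
    have htailsum : Summable (fun m : ℕ =>
        Complex.ofReal ((((m + 1 : ℕ) : ℝ) + 1) ^ (-β)) * tpow t ((m + 1) + 1)) :=
      ((hsum2 t).comp_injective (add_left_injective 1)).congr (fun m => rfl)
    have htl : ‖∑' m : ℕ,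
        Complex.ofReal ((((m + 1 : ℕ) : ℝ) + 1) ^ (-β)) * tpow t ((m + 1) + 1)‖ ≤ R := by
      refine (norm_tsum_le_tsum_norm ?_).trans ?_
      · apply Summable.of_nonneg_of_le (fun m => norm_nonneg _)
          (fun m => le_of_eq (hnorm2 t (m + 1)))
        exact (summable_nat_add_iff 1).mpr hS2
      · rw [hR_def]
        refine le_of_eq (tsum_congr fun m => ?_)
        rw [hnorm2 t (m + 1)]
        push_cast
        ring_nf
    rw [hsplit]
    calc 1 - R ≤ ‖(1 : ℂ)‖ - ‖∑' m : ℕ,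
          Complex.ofReal ((((m + 1 : ℕ) : ℝ) + 1) ^ (-β)) * tpow t ((m + 1) + 1)‖ := by
          rw [norm_one]; linarith
      _ ≤ ‖1 + ∑' m : ℕ,
          Complex.ofReal ((((m + 1 : ℕ) : ℝ) + 1) ^ (-β)) * tpow t ((m + 1) + 1)‖ := by
          have h := norm_sub_norm_le (1 : ℂ)
            (-(∑' m : ℕ, Complex.ofReal ((((m + 1 : ℕ) : ℝ) + 1) ^ (-β)) * tpow t ((m + 1) + 1)))
          rw [sub_neg_eq_add, norm_neg] at h
          exact h
  have h1R : (0 : ℝ) < 1 - R := by linarith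
  have hDne : ∀ t, D t ≠ 0 := by
    intro t h
    have := hDge t
    rw [h, norm_zero] at this
    linarith
  have hfcont : Continuous fun t => N t / D t := hNcont.div hDcont hDne
  refine ⟨hfcont.aestronglyMeasurable, ?_⟩
  apply HasFiniteIntegral.of_bounded (C := C / (1 - R))
  filter_upwards with t
  rw [norm_div]
  have hCnn : 0 ≤ C := tsum_nonneg fun m => Real.rpow_nonneg (by positivity) _
  exact div_le_div₀ hCnn (hNle t) h1R (hDge t)
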